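/- Let Φ be a C¹ map of ℝ² with fixed point p such that DΦ(p) = 0, and let h ∈ (0,1), C > 1 satisfy |Φ(x) − p| ≤ |x − p| + C·|x − p|² for all x ∈ B_h(p). Then for every n ∈ ℕ and every x with |x − p| ≤ h/(e·n·C), the n-th iterate satisfies |Φⁿ(x) − p| ≤ h. -/

import Mathlib

open Real

/-- Iterating a `C¹` map with a degenerate fixed point (`DΦ(p) = 0`) whose displacement is
quadratically small near `p`: points starting within `h/(e·n·C)` of `p` remain within `h`
after `n` iterations. -/
theorem iterates_stay_close
    (Φ : ℝ × ℝ → ℝ × ℝ) (p : ℝ × ℝ)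
    (hC1 : ContDiff ℝ 1 Φ) (hfix : Φ p = p) (hD : fderiv ℝ Φ p = 0)
    (h C : ℝ) (hh : h ∈ Set.Ioo (0:ℝ) 1) (hCgt : 1 < C)
    (hquad : ∀ x : ℝ × ℝ, ‖x - p‖ ≤ h → ‖Φ x - p‖ ≤ ‖x - p‖ + C * ‖x - p‖ ^ 2) :
    ∀ (n : ℕ) (x : ℝ × ℝ), ‖x - p‖ ≤ h / (Real.exp 1 * n * C) → ‖Φ^[n] x - p‖ ≤ h := by
  intro n x hx
  obtain ⟨hh0, hh1⟩ := hh
  rcases Nat.eq_zero_or_pos n with rfl | hn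
  · have hx0 : ‖x - p‖ ≤ 0 := by simpa using hx
    simpa using le_trans hx0 hh0.le
  have hn1 : (1:ℝ) ≤ (n:ℝ) := by exact_mod_cast hn
  have hnpos : (0:ℝ) < n := by linarith
  have hC0 : (0:ℝ) < C := by linarith
  have he : (0:ℝ) < Real.exp 1 := Real.exp_pos 1
  set r := h / (Real.exp 1 * ↑n * C) with hr
  have hrpos : 0 ≤ r := by positivity
  have herC : Real.exp 1 * r = h / (↑n * C) := by
    rw [hr]; field_simp
  have h1nC : (1:ℝ) ≤ ↑n * C := by nlinarith
  have hnCh : h / (↑n * C) ≤ h := by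
    rw [div_le_iff₀ (by positivity)]
    nlinarith [mul_le_mul_of_nonneg_left h1nC hh0.le]
  have key : ∀ k ≤ n, ‖Φ^[k] x - p‖ ≤ Real.exp (↑k / ↑n) * r := by
    intro k hk
    induction k with
    | zero => simpa using hx
    | succ k ih =>
      have hk' : k ≤ n := Nat.le_of_succ_le hk
      have ihk := ih hk'
      have hexp_le : Real.exp (↑k / ↑n) ≤ Real.exp 1 := by
        apply Real.exp_le_exp.mpr
        rw [div_le_one hnpos]
        exact_mod_cast hk'
      have hd : ‖Φ^[k] x - p‖ ≤ Real.exp 1 * r :=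
        le_trans ihk (mul_le_mul_of_nonneg_right hexp_le hrpos)
      have hdn : ‖Φ^[k] x - p‖ ≤ h / (↑n * C) := herC ▸ hd
      have hdh : ‖Φ^[k] x - p‖ ≤ h := hdn.trans hnCh
      have hstep := hquad _ hdh
      have hnn : (0:ℝ) ≤ ‖Φ^[k] x - p‖ := norm_nonneg _
      have h1 : C * ‖Φ^[k] x - p‖ ≤ 1 / ↑n := by
        have : C * (h / (↑n * C)) = h / ↑n := by field_simp
        calc C * ‖Φ^[k] x - p‖ ≤ C * (h / (↑n * C)) := by nlinarith
          _ = h / ↑n := this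
          _ ≤ 1 / ↑n := by gcongr
      rw [Function.iterate_succ_apply']
      have hone : (1:ℝ) + 1/↑n ≤ Real.exp (1/↑n) := by
        have := Real.add_one_le_exp (1/(n:ℝ))
        linarith
      calc ‖Φ (Φ^[k] x) - p‖ ≤ ‖Φ^[k] x - p‖ + C * ‖Φ^[k] x - p‖ ^ 2 := hstep
        _ ≤ ‖Φ^[k] x - p‖ * (1 + 1/↑n) := by nlinarith
        _ ≤ Real.exp (↑k / ↑n) * r * (1 + 1/↑n) := by
            apply mul_le_mul_of_nonneg_right ihk (by positivity)
        _ ≤ Real.exp (↑k / ↑n) * r * Real.exp (1/↑n) := by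
            apply mul_le_mul_of_nonneg_left hone (by positivity)
        _ = Real.exp (↑(k+1) / ↑n) * r := by
            rw [mul_right_comm, ← Real.exp_add, ← add_div]
            push_cast; ring_nf
  have := key n le_rfl
  rw [div_self hnpos.ne'] at this
  calc ‖Φ^[n] x - p‖ ≤ Real.exp 1 * r := this
    _ = h / (↑n * C) := herC
    _ ≤ h := hnCh
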